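/- Let S ≥ 1 and k ≥ 0 be integers. Then the determinant of the (k+1)×(k+1) Hankel matrix with (i,j)-entry (1)_{i+j}/(1+S)_{i+j}, for 0 ≤ i,j ≤ k, equals ∏_{m=0}^{k} (m!)^2 · (S)_m / [ (S+m)_m · (S+1)_{2m} ]. -/

import Mathlib

open Finset Nat Matrix

lemma pascal_sum (f : ℕ → ℝ) (i : ℕ) :
    ∑ a ∈ range (i+2), (-1:ℝ)^a * ((i+1).choose a) * f a
      = ∑ a ∈ range (i+1), (-1:ℝ)^a * (i.choose a) * f a
        - ∑ a ∈ range (i+1), (-1:ℝ)^a * (i.choose a) * f (a+1) := by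
  have h1 : ∑ a ∈ range (i+2), (-1:ℝ)^a * ((i+1).choose a) * f a
      = (∑ a ∈ range (i+1), (-1:ℝ)^(a+1) * ((i+1).choose (a+1)) * f (a+1))
        + (-1:ℝ)^0 * ((i+1).choose 0) * f 0 := by
    rw [Finset.sum_range_succ' (fun a => (-1:ℝ)^a * ((i+1).choose a) * f a) (i+1)]
  have h2 : ∑ a ∈ range (i+2), (-1:ℝ)^a * ((i).choose a) * f a
      = (∑ a ∈ range (i+1), (-1:ℝ)^(a+1) * ((i).choose (a+1)) * f (a+1))
        + (-1:ℝ)^0 * ((i).choose 0) * f 0 := by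
    rw [Finset.sum_range_succ' (fun a => (-1:ℝ)^a * ((i).choose a) * f a) (i+1)]
  have h3 : ∑ a ∈ range (i+2), (-1:ℝ)^a * ((i).choose a) * f a
      = ∑ a ∈ range (i+1), (-1:ℝ)^a * ((i).choose a) * f a := by
    rw [Finset.sum_range_succ]
    simp [Nat.choose_succ_self]
  rw [h1, ← h3, h2]
  have h4 : ∀ a ∈ range (i+1), (-1:ℝ)^(a+1) * ((i+1).choose (a+1)) * f (a+1)
      = ((-1:ℝ)^(a+1) * ((i).choose (a+1)) * f (a+1)) - ((-1:ℝ)^a * ((i).choose a) * f (a+1)) := by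
    intro a _
    rw [Nat.choose_succ_succ]
    push_cast
    ring
  rw [Finset.sum_congr rfl h4, Finset.sum_sub_distrib]
  simp
  ring
lemma fact_ne (n : ℕ) : ((n ! : ℕ) : ℝ) ≠ 0 := by exact_mod_cast n.factorial_ne_zero

lemma sumA (t : ℕ) : ∀ i j : ℕ,
    ∑ a ∈ range (i+1), (-1:ℝ)^a * (i.choose a) * (((a+j)! : ℕ) : ℝ) / (((t+1+a+j)! : ℕ) : ℝ)
      = ((j ! : ℕ) : ℝ) * (((t+i)! : ℕ) : ℝ) / (((t ! : ℕ)) * (((t+1+i+j)! : ℕ) : ℝ)) := by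
  intro i
  induction i with
  | zero =>
    intro j
    simp
    rw [mul_comm (((j ! : ℕ) : ℝ)), mul_div_mul_left _ _ (fact_ne t)]
  | succ i ih =>
    intro j
    have hps := pascal_sum (fun a => (((a+j)! : ℕ) : ℝ) / (((t+1+a+j)! : ℕ) : ℝ)) i
    simp only [← mul_div_assoc] at hps
    rw [show i + 1 + 1 = i + 2 from rfl, hps]
    have e1 : ∀ a : ℕ, (a+1) + j = a + (j+1) := by omega
    have e2 : ∀ a : ℕ, t+1+(a+1)+j = t+1+a+(j+1) := by omega
    simp only [e1, e2]
    rw [ih j, ih (j+1)]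
    have c1 : ((t+1+i+(j+1))! : ℕ) = (t+1+i+j+1) * (t+1+i+j)! := by
      rw [show t+1+i+(j+1) = (t+1+i+j)+1 from rfl, Nat.factorial_succ]
    have c2 : ((j+1)! : ℕ) = (j+1) * j ! := Nat.factorial_succ j
    have c3 : ((t+(i+1))! : ℕ) = (t+i+1) * (t+i)! := by
      rw [show t+(i+1) = (t+i)+1 from rfl, Nat.factorial_succ]
    rw [c1, c2, c3]
    have h1 : ((t ! : ℕ) : ℝ) ≠ 0 := fact_ne t
    have h2 : (((t+1+i+j)! : ℕ) : ℝ) ≠ 0 := fact_ne _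
    push_cast
    have h3 : ((t:ℝ)+1+i+j+1) ≠ 0 := by positivity
    push_cast at *
    field_simp
    ring

lemma det_cauchy : ∀ (n : ℕ) (x y : Fin n → ℝ), (∀ i j, x i + y j ≠ 0) →
    (Matrix.of fun i j => 1/(x i + y j)).det =
      (∏ i : Fin n, ∏ j ∈ Finset.Ioi i, ((x j - x i) * (y j - y i)))
        / ∏ i : Fin n, ∏ j : Fin n, (x i + y j) := by
  intro n
  induction n with
  | zero => intro x y h; simp [Matrix.det_fin_zero]
  | succ n ih =>
    intro x y h
    have h00 := h 0 0
    -- the matrices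
    set A : Matrix (Fin (n+1)) (Fin (n+1)) ℝ := Matrix.of fun i j => 1/(x i + y j) with hA
    set N : Matrix (Fin (n+1)) (Fin (n+1)) ℝ := Matrix.of fun i j =>
      if j = 0 then (1:ℝ) else 1/(x i + y j) with hN
    set B : Matrix (Fin (n+1)) (Fin (n+1)) ℝ := Matrix.of fun i j =>
      (if j = 0 then (1:ℝ) else (y 0 - y j)) * ((1/(x i + y 0)) * N i j) with hB
    set M : Matrix (Fin (n+1)) (Fin (n+1)) ℝ := Matrix.of fun i j =>
      if i = 0 then N 0 j else
        (if j = 0 then 0 else (x 0 - x i) * (1/(x i + y j)) * (1/(x 0 + y j))) with hM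
    -- step 1 : det A = det B
    have hAB : A.det = B.det := by
      rw [← Matrix.det_transpose A, ← Matrix.det_transpose B]
      refine Matrix.det_eq_of_forall_row_eq_smul_add_const
        (fun j => if j = 0 then (0:ℝ) else 1) 0 (by simp) (fun j i => ?_)
      simp only [Matrix.transpose_apply, hA, hB, hN, Matrix.of_apply]
      by_cases hj : j = 0
      · simp [hj]
      · simp only [hj, if_neg hj, if_pos rfl, if_true, if_false]
        field_simp [h i j, h i 0]
        ring
    -- step 2 : det B = (∏ v) * (∏ u) * det N
    have hBdet : B.det = (∏ j : Fin (n+1), (if j = 0 then (1:ℝ) else (y 0 - y j))) *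
        ((∏ i : Fin (n+1), 1/(x i + y 0)) * N.det) := by
      rw [hB]
      rw [show (Matrix.of fun i j => (if j = 0 then (1:ℝ) else (y 0 - y j)) * ((1/(x i + y 0)) * N i j))
          = (Matrix.of fun i j => (if j = 0 then (1:ℝ) else (y 0 - y j)) *
              ((Matrix.of fun i j => (1/(x i + y 0)) * N i j) i j)) from rfl]
      rw [Matrix.det_mul_row (fun j => if j = 0 then (1:ℝ) else (y 0 - y j))
        (Matrix.of fun i j => (1/(x i + y 0)) * N i j)]
      rw [Matrix.det_mul_column (fun i => 1/(x i + y 0)) N]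
    -- step 3 : det N = det M
    have hNM : N.det = M.det := by
      refine Matrix.det_eq_of_forall_row_eq_smul_add_const
        (fun i => if i = 0 then (0:ℝ) else 1) 0 (by simp) (fun i j => ?_)
      have hM0 : M 0 j = N 0 j := by simp [hM]
      by_cases hi : i = 0
      · simp [hi, hM0]
      · simp only [hM, hN, Matrix.of_apply, if_neg hi, hM0]
        by_cases hj : j = 0
        · simp [hj]
        · simp only [if_neg hj, hN, Matrix.of_apply, if_true, if_false]
          field_simp [h i j, h 0 j]
          ring
    -- step 4 : det M = det (submatrix)
    have hsub : M.submatrix ((0 : Fin (n+1)).succAbove) Fin.succ = (Matrix.of fun (i j : Fin n) =>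
        (x 0 - x i.succ) * (1/(x i.succ + y j.succ)) * (1/(x 0 + y j.succ))) := by
      ext i j
      simp [hM, Fin.succ_ne_zero, Fin.succAbove_zero]
    have hMdet : M.det = ((Matrix.of fun (i j : Fin n) =>
        (x 0 - x i.succ) * (1/(x i.succ + y j.succ)) * (1/(x 0 + y j.succ)))).det := by
      rw [Matrix.det_succ_column_zero, Finset.sum_eq_single 0]
      · rw [hsub]
        have hm00 : M 0 0 = 1 := by simp [hM, hN]
        rw [hm00]
        simp
      · intro i _ hi
        have : M i 0 = 0 := by simp [hM, hN, hi]
        simp [this]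
      · simp
    -- step 5 : factor the submatrix
    have hsubdet : ((Matrix.of fun (i j : Fin n) =>
        (x 0 - x i.succ) * (1/(x i.succ + y j.succ)) * (1/(x 0 + y j.succ)))).det
      = (∏ i : Fin n, (x 0 - x i.succ)) * ((∏ j : Fin n, 1/(x 0 + y j.succ)) *
          ((Matrix.of fun (i j : Fin n) => 1/(x i.succ + y j.succ))).det) := by
      rw [show (Matrix.of fun (i j : Fin n) =>
          (x 0 - x i.succ) * (1/(x i.succ + y j.succ)) * (1/(x 0 + y j.succ)))
        = (Matrix.of fun (i j : Fin n) => (x 0 - x i.succ) *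
            ((Matrix.of fun (i j : Fin n) => (1/(x 0 + y j.succ)) *
              ((Matrix.of fun (i j : Fin n) => 1/(x i.succ + y j.succ)) i j)) i j)) from by
          ext i j
          simp only [Matrix.of_apply]
          ring]
      rw [Matrix.det_mul_column (fun i => (x 0 - x i.succ))
        (Matrix.of fun (i j : Fin n) => (1/(x 0 + y j.succ)) *
          ((Matrix.of fun (i j : Fin n) => 1/(x i.succ + y j.succ)) i j))]
      rw [Matrix.det_mul_row (fun j => 1/(x 0 + y j.succ))
        (Matrix.of fun (i j : Fin n) => 1/(x i.succ + y j.succ))]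
    -- step 6 : inductive hypothesis
    have hih : ((Matrix.of fun (i j : Fin n) => 1/(x i.succ + y j.succ))).det
        = (∏ i : Fin n, ∏ j ∈ Finset.Ioi i, ((x j.succ - x i.succ) * (y j.succ - y i.succ)))
          / ∏ i : Fin n, ∏ j : Fin n, (x i.succ + y j.succ) := by
      have := ih (x ∘ Fin.succ) (y ∘ Fin.succ) (fun i j => h i.succ j.succ)
      simpa [Function.comp] using this
    -- assemble
    have hV : (∏ j : Fin (n+1), (if j = 0 then (1:ℝ) else (y 0 - y j)))
        = ∏ j : Fin n, (y 0 - y j.succ) := by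
      rw [Fin.prod_univ_succ]
      simp [Fin.succ_ne_zero]
    have hU : (∏ i : Fin (n+1), 1/(x i + y 0))
        = 1 / ((x 0 + y 0) * ∏ i : Fin n, (x i.succ + y 0)) := by
      simp only [one_div, ← Finset.prod_inv_distrib]
      rw [Fin.prod_univ_succ]
      rw [mul_inv]
      simp [← Finset.prod_inv_distrib]
    have hPv : (∏ j : Fin n, 1/(x 0 + y j.succ)) = 1 / (∏ j : Fin n, (x 0 + y j.succ)) := by
      simp only [one_div, ← Finset.prod_inv_distrib]
    have hP : (∏ i : Fin (n+1), ∏ j ∈ Finset.Ioi i, ((x j - x i) * (y j - y i)))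
        = (∏ j : Fin n, ((x j.succ - x 0) * (y j.succ - y 0))) *
          (∏ i : Fin n, ∏ j ∈ Finset.Ioi i, ((x j.succ - x i.succ) * (y j.succ - y i.succ))) := by
      rw [Fin.prod_univ_succ, Fin.prod_Ioi_zero]
      congr 1
      exact Finset.prod_congr rfl fun i _ => Fin.prod_Ioi_succ (fun j => (x j - x i.succ) * (y j - y i.succ)) i
    have hQ : (∏ i : Fin (n+1), ∏ j : Fin (n+1), (x i + y j))
        = ((x 0 + y 0) * ∏ j : Fin n, (x 0 + y j.succ)) *
          ((∏ i : Fin n, (x i.succ + y 0)) *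
            ∏ i : Fin n, ∏ j : Fin n, (x i.succ + y j.succ)) := by
      rw [Fin.prod_univ_succ]
      congr 1
      · rw [Fin.prod_univ_succ]
      · rw [← Finset.prod_mul_distrib]
        exact Finset.prod_congr rfl fun i _ => Fin.prod_univ_succ _
    have hsign : (∏ j : Fin n, (y 0 - y j.succ)) * (∏ i : Fin n, (x 0 - x i.succ))
        = (∏ j : Fin n, (x j.succ - x 0)) * (∏ j : Fin n, (y j.succ - y 0)) := by
      rw [← Finset.prod_mul_distrib, ← Finset.prod_mul_distrib]
      exact Finset.prod_congr rfl fun j _ => by ring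
    -- nonzeroness
    have q1 : (x 0 + y 0) ≠ 0 := h 0 0
    have q2 : (∏ j : Fin n, (x 0 + y j.succ)) ≠ 0 :=
      Finset.prod_ne_zero_iff.2 fun j _ => h 0 j.succ
    have q3 : (∏ i : Fin n, (x i.succ + y 0)) ≠ 0 :=
      Finset.prod_ne_zero_iff.2 fun i _ => h i.succ 0
    have q4 : (∏ i : Fin n, ∏ j : Fin n, (x i.succ + y j.succ)) ≠ 0 :=
      Finset.prod_ne_zero_iff.2 fun i _ => Finset.prod_ne_zero_iff.2 fun j _ => h i.succ j.succ
    rw [hAB, hBdet, hNM, hMdet, hsubdet, hih, hV, hU, hPv, hP, hQ]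
    rw [Finset.prod_mul_distrib, ← hsign]
    field_simp
noncomputable def mu (s m : ℕ) : ℝ := ((m ! : ℕ):ℝ) * (((s+1)! : ℕ):ℝ) / (((s+1+m)! : ℕ):ℝ)

lemma sum_fin_choose (n i : ℕ) (hi : i < n) (f : ℕ → ℝ) :
    ∑ a : Fin n, (-1:ℝ)^(a:ℕ) * ((i.choose (a:ℕ)) : ℝ) * f (a:ℕ)
      = ∑ a ∈ range (i+1), (-1:ℝ)^a * (i.choose a) * f a := by
  rw [Fin.sum_univ_eq_sum_range (fun a => (-1:ℝ)^a * (i.choose a) * f a) n]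
  symm
  apply Finset.sum_subset
  · intro a ha
    simp only [Finset.mem_range] at *
    omega
  · intro a _ ha
    simp only [Finset.mem_range, not_lt] at ha
    have : i < a := by omega
    simp [Nat.choose_eq_zero_of_lt this]

lemma step1 (s n i b : ℕ) (hi : i < n) :
    ∑ a : Fin n, (-1:ℝ)^(a:ℕ) * ((i.choose (a:ℕ)):ℝ) * mu s ((a:ℕ)+b)
      = (((s+1):ℕ):ℝ) * ((b ! : ℕ):ℝ) * (((s+i)! : ℕ):ℝ) / (((s+1+i+b)! : ℕ):ℝ) := by
  rw [sum_fin_choose n i hi (fun a => mu s (a+b))]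
  unfold mu
  have e : ∀ a ∈ range (i+1), (-1:ℝ)^a * ((i.choose a):ℝ) *
        ((((a+b)! : ℕ):ℝ) * (((s+1)! : ℕ):ℝ) / (((s+1+(a+b))! : ℕ):ℝ))
      = (((s+1)! : ℕ):ℝ) * ((-1:ℝ)^a * (i.choose a) * (((a+b)! : ℕ):ℝ) / (((s+1+a+b)! : ℕ):ℝ)) := by
    intro a _
    rw [show s+1+(a+b) = s+1+a+b from by omega]
    ring
  rw [Finset.sum_congr rfl e, ← Finset.mul_sum, sumA s i b, Nat.factorial_succ s]
  push_cast
  field_simp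
lemma step2 (s n i j : ℕ) (hj : j < n) :
    ∑ b : Fin n, (-1:ℝ)^(b:ℕ) * ((j.choose (b:ℕ)):ℝ) *
      ((((s+1):ℕ):ℝ) * (((b:ℕ)! : ℕ):ℝ) * (((s+i)! : ℕ):ℝ) / (((s+1+i+(b:ℕ))! : ℕ):ℝ))
    = ((s:ℝ)+1)/((s:ℝ)+1+i+j) := by
  rw [sum_fin_choose n j hj (fun b => (((s+1):ℕ):ℝ) * ((b ! : ℕ):ℝ) * (((s+i)! : ℕ):ℝ)
    / (((s+1+i+b)! : ℕ):ℝ))]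
  have e : ∀ b ∈ range (j+1), (-1:ℝ)^b * ((j.choose b):ℝ) *
        ((((s+1):ℕ):ℝ) * ((b ! : ℕ):ℝ) * (((s+i)! : ℕ):ℝ) / (((s+1+i+b)! : ℕ):ℝ))
      = ((((s+1):ℕ):ℝ) * (((s+i)! : ℕ):ℝ)) *
        ((-1:ℝ)^b * ((j.choose b):ℝ) * (((b+0)! : ℕ):ℝ) / ((((s+i)+1+b+0)! : ℕ):ℝ)) := by
    intro b _
    rw [show (s+i)+1+b+0 = s+1+i+b from by omega, show b+0 = b from rfl]
    ring
  rw [Finset.sum_congr rfl e, ← Finset.mul_sum, sumA (s+i) j 0]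
  rw [show (s+i)+1+j+0 = (s+i+j)+1 from by omega, Nat.factorial_succ (s+i+j)]
  have h1 : (((s+i)! : ℕ):ℝ) ≠ 0 := fact_ne _
  have h2 : (((s+i+j)! : ℕ):ℝ) ≠ 0 := fact_ne _
  have h3 : ((s:ℝ)+1+i+j) ≠ 0 := by positivity
  push_cast
  field_simp
  ring

lemma detH_eq (s k : ℕ) :
    (Matrix.of fun i j : Fin (k+1) => mu s ((i:ℕ)+(j:ℕ))).det
      = (Matrix.of fun i j : Fin (k+1) => ((s:ℝ)+1)/((s:ℝ)+1+(i:ℕ)+(j:ℕ))).det := by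
  set n := k+1 with hn
  set P : Matrix (Fin n) (Fin n) ℝ :=
    Matrix.of fun i a => (-1:ℝ)^(a:ℕ) * (((i:ℕ).choose (a:ℕ)):ℝ) with hP
  set H : Matrix (Fin n) (Fin n) ℝ := Matrix.of fun i j => mu s ((i:ℕ)+(j:ℕ)) with hH
  have hPH : P * H * Pᵀ = Matrix.of fun i j : Fin n => ((s:ℝ)+1)/((s:ℝ)+1+(i:ℕ)+(j:ℕ)) := by
    ext i j
    rw [Matrix.mul_apply]
    have inner : ∀ b : Fin n, (P * H) i b
        = (((s+1):ℕ):ℝ) * (((b:ℕ)! : ℕ):ℝ) * (((s+(i:ℕ))! : ℕ):ℝ)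
            / (((s+1+(i:ℕ)+(b:ℕ))! : ℕ):ℝ) := by
      intro b
      rw [Matrix.mul_apply]
      exact step1 s n (i:ℕ) (b:ℕ) i.isLt
    have e : ∀ b : Fin n, (P * H) i b * Pᵀ b j
        = (-1:ℝ)^(b:ℕ) * (((j:ℕ).choose (b:ℕ)):ℝ) *
          ((((s+1):ℕ):ℝ) * (((b:ℕ)! : ℕ):ℝ) * (((s+(i:ℕ))! : ℕ):ℝ)
            / (((s+1+(i:ℕ)+(b:ℕ))! : ℕ):ℝ)) := by
      intro b
      rw [inner b]
      simp only [Matrix.transpose_apply, hP, Matrix.of_apply]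
      ring
    rw [Finset.sum_congr rfl (fun b _ => e b), step2 s n (i:ℕ) (j:ℕ) j.isLt]
    simp
  have hPdet : P.det = ∏ i : Fin n, (-1:ℝ)^(i:ℕ) := by
    rw [Matrix.det_of_lowerTriangular P (by
      intro i j hij
      have : (i:ℕ) < (j:ℕ) := hij
      simp [hP, Nat.choose_eq_zero_of_lt this])]
    exact Finset.prod_congr rfl fun i _ => by simp [hP]
  have hsq : P.det * P.det = 1 := by
    rw [hPdet, ← Finset.prod_mul_distrib]
    have : ∀ i : Fin n, (-1:ℝ)^(i:ℕ) * (-1:ℝ)^(i:ℕ) = 1 := by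
      intro i
      rw [← mul_pow]
      norm_num
    rw [Finset.prod_congr rfl fun i _ => this i]
    simp
  calc H.det = (P.det * P.det) * H.det := by rw [hsq]; ring
    _ = (P * H * Pᵀ).det := by rw [Matrix.det_mul, Matrix.det_mul, Matrix.det_transpose]; ring
    _ = _ := by rw [hPH]
lemma tele (a : ℕ) : ∀ n, a ! * ∏ j ∈ range n, (a+1+j) = (a+n)! := by
  intro n
  induction n with
  | zero => simp
  | succ n ih =>
    rw [Finset.prod_range_succ, ← mul_assoc, ih,
      show a+(n+1) = (a+n)+1 from rfl, Nat.factorial_succ]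
    ring

lemma natlemma (s : ℕ) : ∀ k, (∏ i ∈ range (k+1), ∏ j ∈ range (k+1), (s+1+i+j)) *
      ∏ m ∈ range (k+1), ((s+m)! * (s+m)!)
    = ∏ m ∈ range (k+1), ((s+2*m)! * (s+1+2*m)!) := by
  intro k
  induction k with
  | zero =>
    simp [Nat.factorial_succ]
    ring
  | succ k ih =>
    have hD : ∏ i ∈ range (k+2), ∏ j ∈ range (k+2), (s+1+i+j)
        = ((∏ i ∈ range (k+1), ∏ j ∈ range (k+1), (s+1+i+j)) *
            ∏ i ∈ range (k+1), (s+1+i+(k+1)))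
          * ∏ j ∈ range (k+2), (s+1+(k+1)+j) := by
      rw [Finset.prod_range_succ]
      congr 1
      rw [← Finset.prod_mul_distrib]
      exact Finset.prod_congr rfl fun i _ => Finset.prod_range_succ _ _
    have t1 : (s+k+1)! * ∏ i ∈ range (k+1), (s+1+i+(k+1)) = (s+2*k+2)! := by
      rw [Finset.prod_congr rfl (fun i _ => show s+1+i+(k+1) = (s+k+1)+1+i from by omega)]
      rw [tele (s+k+1) (k+1), show (s+k+1)+(k+1) = s+2*k+2 from by omega]
    have t2 : (s+k+1)! * ∏ j ∈ range (k+2), (s+1+(k+1)+j) = (s+2*k+3)! := by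
      rw [Finset.prod_congr rfl (fun j _ => show s+1+(k+1)+j = (s+k+1)+1+j from by omega)]
      rw [tele (s+k+1) (k+2), show (s+k+1)+(k+2) = s+2*k+3 from by omega]
    rw [show k+1+1 = k+2 from rfl] at *
    rw [Finset.prod_range_succ (fun m => (s+m)! * (s+m)!) (k+1),
      Finset.prod_range_succ (fun m => (s+2*m)! * (s+1+2*m)!) (k+1), hD, ← ih]
    simp only [show s+2*(k+1) = s+2*k+2 from by omega,
      show s+1+2*(k+1) = s+2*k+3 from by omega, show s+(k+1) = s+k+1 from by omega]
    rw [← t1, ← t2]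
    ring

lemma sfac : ∀ n, (∏ i : Fin n, ∏ j ∈ Finset.Ioi i, (((j:ℕ):ℝ) - ((i:ℕ):ℝ)))
    = ∏ m ∈ range n, ((m ! : ℕ):ℝ) := by
  intro n
  induction n with
  | zero => simp
  | succ n ih =>
    rw [Fin.prod_univ_succ, Fin.prod_Ioi_zero, Finset.prod_range_succ]
    have h1 : (∏ j : Fin n, (((j.succ:ℕ):ℝ) - ((0:ℕ):ℝ))) = ((n ! : ℕ):ℝ) := by
      simp only [Fin.val_succ, Nat.cast_zero, sub_zero]
      rw [← Nat.cast_prod]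
      congr 1
      rw [Fin.prod_univ_eq_prod_range (fun j => j+1) n,
        Finset.prod_range_add_one_eq_factorial]
    have h2 : (∏ i : Fin n, ∏ j ∈ Finset.Ioi i.succ, (((j:ℕ):ℝ) - ((i.succ:ℕ):ℝ)))
        = ∏ m ∈ range n, ((m ! : ℕ):ℝ) := by
      rw [← ih]
      refine Finset.prod_congr rfl fun i _ => ?_
      rw [Fin.prod_Ioi_succ]
      refine Finset.prod_congr rfl fun j _ => ?_
      simp only [Fin.val_succ]
      push_cast
      ring
    rw [show ((0:Fin (n+1)):ℕ) = 0 from rfl] at *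
    rw [h1, h2]
    ring

/-- for integers `S ≥ 1` and `k ≥ 0`,
`det_{0≤i,j≤k}[ (1)_{i+j}/(1+S)_{i+j} ]
  = ∏_{m=0}^{k} (m!)^2 (S)_m / ((S+m)_m (S+1)_{2m})`. -/
theorem hankel_pochhammer_determinant (S k : ℕ) (hS : 1 ≤ S) :
    Matrix.det (Matrix.of (fun i j : Fin (k + 1) =>
        (ascPochhammer ℝ ((i : ℕ) + (j : ℕ))).eval 1 /
          (ascPochhammer ℝ ((i : ℕ) + (j : ℕ))).eval (1 + (S : ℝ)))) =
    ∏ m ∈ Finset.range (k + 1),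
      ((Nat.factorial m : ℝ) ^ 2 * (ascPochhammer ℝ m).eval (S : ℝ)) /
        ((ascPochhammer ℝ m).eval ((S : ℝ) + m) *
          (ascPochhammer ℝ (2 * m)).eval ((S : ℝ) + 1)) := by
  obtain ⟨s, rfl⟩ : ∃ s, S = s + 1 := ⟨S - 1, by omega⟩
  -- Step A : the matrix entries are `mu`
  have hM : (Matrix.of (fun i j : Fin (k + 1) =>
      (ascPochhammer ℝ ((i : ℕ) + (j : ℕ))).eval 1 /
        (ascPochhammer ℝ ((i : ℕ) + (j : ℕ))).eval (1 + ((s + 1 : ℕ) : ℝ))))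
      = Matrix.of fun i j : Fin (k+1) => mu s ((i:ℕ)+(j:ℕ)) := by
    ext i j
    simp only [Matrix.of_apply]
    set n := (i:ℕ)+(j:ℕ) with hn
    have e0 : (ascPochhammer ℝ n).eval 1 = ((n ! : ℕ):ℝ) := ascPochhammer_eval_one ℝ n
    have e1 : (ascPochhammer ℝ n).eval (1 + ((s+1:ℕ):ℝ))
        = (((s+1+n)! : ℕ):ℝ) / (((s+1)! : ℕ):ℝ) := by
      rw [eq_div_iff (fact_ne (s+1)), mul_comm]
      have := factorial_mul_ascPochhammer ℝ (s+1) n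
      rw [show ((s+1:ℕ):ℝ) + 1 = 1 + ((s+1:ℕ):ℝ) from by push_cast; ring] at this
      exact_mod_cast this
    rw [e0, e1, div_div_eq_mul_div]
    rfl
  rw [hM, detH_eq s k]
  -- Step B : Cauchy determinant
  have hxyne : ∀ i j : Fin (k+1), ((s:ℝ)+1+(i:ℕ)) + ((j:ℕ):ℝ) ≠ 0 := by
    intro i j; positivity
  have hC : (Matrix.of fun i j : Fin (k+1) => ((s:ℝ)+1)/((s:ℝ)+1+(i:ℕ)+(j:ℕ)))
      = Matrix.of fun i j : Fin (k+1) => ((s:ℝ)+1) *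
          ((Matrix.of fun i j : Fin (k+1) =>
            1/(((s:ℝ)+1+(i:ℕ)) + ((j:ℕ):ℝ))) i j) := by
    ext i j
    simp only [Matrix.of_apply]
    rw [mul_one_div]
  rw [hC, Matrix.det_mul_column (fun _ => (s:ℝ)+1),
    det_cauchy (k+1) (fun i => (s:ℝ)+1+(i:ℕ)) (fun j => ((j:ℕ):ℝ)) hxyne]
  have hconst : (∏ _i : Fin (k+1), ((s:ℝ)+1)) = ((s:ℝ)+1)^(k+1) := by
    simp [Finset.prod_const]
  have hNum : (∏ i : Fin (k+1), ∏ j ∈ Finset.Ioi i,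
        (((((s:ℝ)+1+(j:ℕ))) - ((s:ℝ)+1+(i:ℕ))) * (((j:ℕ):ℝ) - ((i:ℕ):ℝ))))
      = (∏ m ∈ range (k+1), ((m ! : ℕ):ℝ)) * (∏ m ∈ range (k+1), ((m ! : ℕ):ℝ)) := by
    rw [← sfac (k+1), ← Finset.prod_mul_distrib]
    refine Finset.prod_congr rfl fun i _ => ?_
    rw [← Finset.prod_mul_distrib]
    refine Finset.prod_congr rfl fun j _ => ?_
    ring
  have hDen : (∏ i : Fin (k+1), ∏ j : Fin (k+1), (((s:ℝ)+1+(i:ℕ)) + ((j:ℕ):ℝ)))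
      = ∏ i ∈ range (k+1), ∏ j ∈ range (k+1), ((s:ℝ)+1+i+j) := by
    rw [Fin.prod_univ_eq_prod_range (fun i => ∏ j : Fin (k+1), (((s:ℝ)+1+i) + ((j:ℕ):ℝ)))]
    exact Finset.prod_congr rfl fun i _ =>
      Fin.prod_univ_eq_prod_range (fun j => ((s:ℝ)+1+i) + (j:ℝ)) _
  rw [hconst, hNum, hDen]
  -- Step C : rewrite the RHS product
  have hterm : ∀ m ∈ range (k+1),
      ((Nat.factorial m : ℝ) ^ 2 * (ascPochhammer ℝ m).eval (((s+1:ℕ)) : ℝ)) /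
        ((ascPochhammer ℝ m).eval (((s+1:ℕ) : ℝ) + m) *
          (ascPochhammer ℝ (2 * m)).eval (((s+1:ℕ) : ℝ) + 1))
      = ((((m ! : ℕ)):ℝ) * ((m ! : ℕ):ℝ)) *
          ((((s:ℝ)+1) * ((((s+m)! : ℕ):ℝ) * (((s+m)! : ℕ):ℝ))) /
            ((((s+2*m)! : ℕ):ℝ) * (((s+1+2*m)! : ℕ):ℝ))) := by
    intro m _
    have e1 : (ascPochhammer ℝ m).eval (((s+1:ℕ)):ℝ) = (((s+m)! : ℕ):ℝ) / ((s ! : ℕ):ℝ) := by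
      rw [eq_div_iff (fact_ne s), mul_comm]
      have := factorial_mul_ascPochhammer ℝ s m
      rw [show ((s:ℕ):ℝ) + 1 = ((s+1:ℕ):ℝ) from by push_cast; ring] at this
      exact_mod_cast this
    have e2 : (ascPochhammer ℝ m).eval (((s+1:ℕ):ℝ) + m) = (((s+m+m)! : ℕ):ℝ) / (((s+m)! : ℕ):ℝ) := by
      rw [eq_div_iff (fact_ne (s+m)), mul_comm]
      have := factorial_mul_ascPochhammer ℝ (s+m) m
      rw [show ((s+m:ℕ):ℝ) + 1 = ((s+1:ℕ):ℝ) + m from by push_cast; ring] at this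
      exact_mod_cast this
    have e3 : (ascPochhammer ℝ (2*m)).eval (((s+1:ℕ):ℝ) + 1)
        = (((s+1+2*m)! : ℕ):ℝ) / (((s+1)! : ℕ):ℝ) := by
      rw [eq_div_iff (fact_ne (s+1)), mul_comm]
      have := factorial_mul_ascPochhammer ℝ (s+1) (2*m)
      rw [show ((s+1:ℕ):ℝ) + 1 = ((s+1:ℕ):ℝ) + 1 from rfl] at this
      exact_mod_cast this
    rw [e1, e2, e3, show s+m+m = s+2*m from by omega, Nat.factorial_succ s]
    have h1 : ((s ! : ℕ):ℝ) ≠ 0 := fact_ne s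
    have h2 : (((s+m)! : ℕ):ℝ) ≠ 0 := fact_ne _
    have h3 : (((s+2*m)! : ℕ):ℝ) ≠ 0 := fact_ne _
    have h4 : (((s+1+2*m)! : ℕ):ℝ) ≠ 0 := fact_ne _
    have h5 : (((s+1) * s ! : ℕ):ℝ) ≠ 0 := by
      push_cast
      positivity
    push_cast
    field_simp
  rw [Finset.prod_congr rfl hterm, Finset.prod_mul_distrib, Finset.prod_mul_distrib,
    Finset.prod_div_distrib, Finset.prod_mul_distrib, Finset.prod_const, card_range]
  -- Step D : the numeric identity
  have natR : (∏ i ∈ range (k+1), ∏ j ∈ range (k+1), ((s:ℝ)+1+i+j)) *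
        ∏ m ∈ range (k+1), ((((s+m)! : ℕ):ℝ) * (((s+m)! : ℕ):ℝ))
      = ∏ m ∈ range (k+1), ((((s+2*m)! : ℕ):ℝ) * (((s+1+2*m)! : ℕ):ℝ)) := by
    have := natlemma s k
    have hcast := congrArg (fun n : ℕ => (n : ℝ)) this
    push_cast at hcast
    convert hcast using 2
  have hDne : (∏ i ∈ range (k+1), ∏ j ∈ range (k+1), ((s:ℝ)+1+i+j)) ≠ 0 := by
    refine Finset.prod_ne_zero_iff.2 fun i _ => Finset.prod_ne_zero_iff.2 fun j _ => ?_
    positivity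
  have hYne : (∏ m ∈ range (k+1), ((((s+2*m)! : ℕ):ℝ) * (((s+1+2*m)! : ℕ):ℝ))) ≠ 0 :=
    Finset.prod_ne_zero_iff.2 fun m _ => mul_ne_zero (fact_ne _) (fact_ne _)
  rw [← natR] at *
  field_simp
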